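/- Let n > α > 0 and u : ℝ^n → (0,∞) be a C¹ function. Fix z ∈ ℝ^n and suppose that for every y ∈ ℝ^n, y ≠ z, the function h(t) = t^{−(n−α)} u((z−y)/t + y) − u(t(z−y) + y) satisfies h(1) = 0 and h(t) ≤ 0 for all t > 1. Then for every y ≠ z, −(n−α) u(z) − 2⟨∇u(z), z−y⟩ ≤ 0; consequently, for every unit vector ν, ⟨∇u(z), ν⟩ ≥ 0, and hence ∇u(z) = 0. -/

import Mathlib

open RealInnerProductSpace Filter Topology

private lemma deriv_at_one_nonpos (f : ℝ → ℝ) (d : ℝ) (hd : HasDerivAt f d 1)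
    (h0 : f 1 = 0) (hle : ∀ t : ℝ, 1 < t → f t ≤ 0) : d ≤ 0 := by
  have h := hd.hasDerivWithinAt (s := Set.Ioi 1)
  rw [hasDerivWithinAt_iff_tendsto_slope,
    Set.diff_singleton_eq_self (by simp)] at h
  have : (nhdsWithin (1:ℝ) (Set.Ioi 1)).NeBot := nhdsGT_neBot 1
  refine le_of_tendsto h ?_
  filter_upwards [self_mem_nhdsWithin] with t ht
  have ht1 : (1:ℝ) < t := ht
  rw [slope_def_field, h0, sub_zero]
  exact div_nonpos_iff.2 (Or.inr ⟨hle t ht1, by linarith⟩)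

theorem stmt_8 (n : ℕ) (hn : 1 ≤ n) (α : ℝ) (hα0 : 0 < α) (hnα : α < (n : ℝ))
    (u : EuclideanSpace ℝ (Fin n) → ℝ) (hu : ∀ x, 0 < u x)
    (hC1 : ContDiff ℝ 1 u) (z : EuclideanSpace ℝ (Fin n))
    (hh : ∀ y : EuclideanSpace ℝ (Fin n), y ≠ z → ∀ t : ℝ, 1 < t →
      t ^ (-((n:ℝ) - α)) * u (t⁻¹ • (z - y) + y) - u (t • (z - y) + y) ≤ 0) :
    (∀ y : EuclideanSpace ℝ (Fin n), y ≠ z →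
      -((n:ℝ) - α) * u z - 2 * ⟪gradient u z, z - y⟫ ≤ 0) ∧
    (∀ ν : EuclideanSpace ℝ (Fin n), ‖ν‖ = 1 → 0 ≤ ⟪gradient u z, ν⟫) ∧
    gradient u z = 0 := by
  set g := gradient u z with hg
  have hdiffu : DifferentiableAt ℝ u z := (hC1.differentiable one_ne_zero) z
  have hG : HasGradientAt u g z := hdiffu.hasGradientAt
  have hF : HasFDerivAt u (InnerProductSpace.toDual ℝ _ g) z := hG.hasFDerivAt
  have part1 : ∀ y : EuclideanSpace ℝ (Fin n), y ≠ z →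
      -((n:ℝ) - α) * u z - 2 * ⟪g, z - y⟫ ≤ 0 := by
    intro y hy
    set v := z - y with hv
    set c : ℝ := -((n:ℝ) - α) with hc
    have hvy : v + y = z := by rw [hv]; abel
    have hφ : HasDerivAt (fun t : ℝ => t • v + y) v 1 := by
      simpa using ((hasDerivAt_id (1:ℝ)).smul_const v).add_const y
    have hφ1 : (1:ℝ) • v + y = z := by simp [hvy]
    have hψ : HasDerivAt (fun t : ℝ => t⁻¹ • v + y) (-v) 1 := by
      have := ((hasDerivAt_inv (one_ne_zero : (1:ℝ) ≠ 0)).smul_const v).add_const y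
      simpa using this
    have hψ1 : (1:ℝ)⁻¹ • v + y = z := by simp [hvy]
    have hu1 : HasDerivAt (fun t : ℝ => u (t • v + y)) ⟪g, v⟫ 1 := by
      have hFz : HasFDerivAt u (InnerProductSpace.toDual ℝ _ g) ((1:ℝ) • v + y) := by
        rw [hφ1]; exact hF
      have := hFz.comp_hasDerivAt 1 hφ
      simpa [InnerProductSpace.toDual_apply_apply, Function.comp_def] using this
    have hu2 : HasDerivAt (fun t : ℝ => u (t⁻¹ • v + y)) (-⟪g, v⟫) 1 := by
      have hFz : HasFDerivAt u (InnerProductSpace.toDual ℝ _ g) ((1:ℝ)⁻¹ • v + y) := by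
        rw [hψ1]; exact hF
      have := hFz.comp_hasDerivAt 1 hψ
      simpa [InnerProductSpace.toDual_apply_apply, inner_neg_right, Function.comp_def] using this
    have hr : HasDerivAt (fun t : ℝ => t ^ c) c 1 := by
      have := Real.hasDerivAt_rpow_const (x := (1:ℝ)) (p := c) (Or.inl one_ne_zero)
      simpa using this
    have hmul : HasDerivAt (fun t : ℝ => t ^ c * u (t⁻¹ • v + y))
        (c * u z + 1 ^ c * (-⟪g, v⟫)) 1 := by
      have := hr.mul hu2
      simpa [hψ1, hvy, Pi.mul_def] using this
    have hd : HasDerivAt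
        (fun t : ℝ => t ^ c * u (t⁻¹ • v + y) - u (t • v + y))
        (c * u z + 1 ^ c * (-⟪g, v⟫) - ⟪g, v⟫) 1 := hmul.sub hu1
    have hd0 : c * u z + 1 ^ c * (-⟪g, v⟫) - ⟪g, v⟫ ≤ 0 := by
      apply deriv_at_one_nonpos _ _ hd
      · simp [hvy, Real.one_rpow]
      · intro t ht
        exact hh y hy t ht
    have h1c : (1:ℝ) ^ c = 1 := Real.one_rpow c
    rw [h1c] at hd0
    linarith
  have part2 : ∀ ν : EuclideanSpace ℝ (Fin n), ‖ν‖ = 1 → 0 ≤ ⟪g, ν⟫ := by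
    intro ν hν
    by_contra hp
    push_neg at hp
    set p := ⟪g, ν⟫ with hpd
    have hname : 0 < ((n:ℝ) - α) * u z := by
      have := hu z; nlinarith
    set R : ℝ := ((n:ℝ) - α) * u z / (-2 * p) + 1 with hR
    have hRpos : 0 < R := by
      have : 0 < ((n:ℝ) - α) * u z / (-2 * p) :=
        div_pos hname (by linarith)
      rw [hR]; linarith
    have hνne : ν ≠ 0 := by intro h; rw [h] at hν; simp at hν
    have hyne : z - R • ν ≠ z := by
      intro h
      have : R • ν = 0 := by
        have := sub_eq_self.mp h
        simpa using this
      rcases smul_eq_zero.mp this with h' | h'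
      · exact absurd h' (ne_of_gt hRpos)
      · exact hνne h'
    have h1 := part1 (z - R • ν) hyne
    rw [show z - (z - R • ν) = R • ν by abel] at h1
    rw [real_inner_smul_right] at h1
    have h2p : 0 < -2 * p := by linarith
    rw [hR] at h1
    have hdiv : ((n:ℝ) - α) * u z / (-2 * p) * (-2 * p) = ((n:ℝ) - α) * u z :=
      div_mul_cancel₀ _ (ne_of_gt h2p)
    nlinarith [hdiv]
  refine ⟨part1, part2, ?_⟩
  by_contra hgne
  have hgn : (0:ℝ) < ‖g‖ := norm_pos_iff.mpr hgne
  have hν : ‖(-(‖g‖⁻¹) • g)‖ = 1 := by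
    rw [norm_smul]
    simp [abs_of_pos (inv_pos.mpr hgn), inv_mul_cancel₀ (ne_of_gt hgn)]
  have h2 := part2 _ hν
  rw [real_inner_smul_right, real_inner_self_eq_norm_sq] at h2
  have heq : -(‖g‖⁻¹) * ‖g‖ ^ 2 = -‖g‖ := by
    field_simp
  linarith
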